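/- For all integers k ≥ 2 and n ≥ 2, there exists a graph G such that TS_k(G) is isomorphic to the complete graph K_n; moreover G can be chosen with n + k − 1 vertices. -/

import Mathlib

open SimpleGraph

/-- `I` is an independent (stable) set of `G`. -/
def IsIndep {V : Type*} (G : SimpleGraph V) (I : Finset V) : Prop :=
  ∀ u ∈ I, ∀ v ∈ I, ¬ G.Adj u v

/-- Vertices of the `TS_k`-reconfiguration graph: size-`k` independent sets of `G`. -/
abbrev TSVert {V : Type*} (G : SimpleGraph V) (k : ℕ) := {I : Finset V // I.card = k ∧ IsIndep G I}

/-- The `TS_k`-reconfiguration graph of `G`: size-`k` independent sets, adjacent iff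
`I \ J = {u}`, `J \ I = {v}` and `uv ∈ E(G)`. -/
def TSk {V : Type*} [DecidableEq V] (G : SimpleGraph V) (k : ℕ) : SimpleGraph (TSVert G k) :=
  SimpleGraph.fromRel (fun I J =>
    ∃ u v, (I : Finset V) \ (J : Finset V) = {u} ∧
      (J : Finset V) \ (I : Finset V) = {v} ∧ G.Adj u v)

/-- For all `k ≥ 2` and `n ≥ 2` there is a graph `G` on `n + k - 1` vertices with
`TS_k(G)` isomorphic to the complete graph `K_n`. -/
theorem stmt4 (k n : ℕ) (hk : 2 ≤ k) (hn : 2 ≤ n) :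
    ∃ G : SimpleGraph (Fin (n + k - 1)),
      Nonempty (TSk G k ≃g (⊤ : SimpleGraph (Fin n))) := by
  classical
  set N := n + k - 1 with hN
  let G : SimpleGraph (Fin N) := SimpleGraph.fromRel (fun u v => u.val < n ∧ v.val < n)
  have hG : ∀ u v : Fin N, G.Adj u v ↔ u ≠ v ∧ u.val < n ∧ v.val < n := by
    intro u v
    simp only [G, SimpleGraph.fromRel_adj]
    tauto
  -- isolated part
  let T : Finset (Fin N) := Finset.univ.filter (fun x => ¬ x.val < n)
  have hTmem : ∀ x : Fin N, x ∈ T ↔ ¬ x.val < n := by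
    intro x; simp [T]
  have hlt : (Finset.univ.filter (fun x : Fin N => x.val < n)).card = n := by
    have : Finset.univ.filter (fun x : Fin N => x.val < n)
        = Finset.map (Fin.castLEEmb (by omega : n ≤ N)) Finset.univ := by
      ext x
      simp only [Finset.mem_filter, Finset.mem_univ, true_and, Finset.mem_map,
        Fin.castLEEmb_apply]
      constructor
      · intro hx
        exact ⟨⟨x.val, hx⟩, rfl⟩
      · rintro ⟨y, rfl⟩
        exact y.isLt
    rw [this, Finset.card_map, Finset.card_univ, Fintype.card_fin]
  have hTcard : T.card = k - 1 := by
    have h := Finset.card_filter_add_card_filter_not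
      (s := (Finset.univ : Finset (Fin N))) (p := fun x : Fin N => x.val < n)
    rw [Finset.card_univ, Fintype.card_fin] at h
    have : (Finset.univ.filter (fun x : Fin N => x.val < n)).card + T.card = N := by
      simpa [T] using h
    omega
  let e : Fin n → Fin N := fun i => ⟨i.val, by omega⟩
  have heT : ∀ i, e i ∉ T := by
    intro i h
    rw [hTmem] at h
    exact h i.isLt
  let I : Fin n → Finset (Fin N) := fun i => insert (e i) T
  have hIcard : ∀ i, (I i).card = k := by
    intro i
    rw [Finset.card_insert_of_notMem (heT i), hTcard]
    omega
  have hIind : ∀ i, IsIndep G (I i) := by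
    intro i u hu v hv hadj
    rw [hG] at hadj
    obtain ⟨hne, hun, hvn⟩ := hadj
    have hu' : u = e i := by
      rcases Finset.mem_insert.mp hu with h | h
      · exact h
      · exact absurd hun ((hTmem u).mp h)
    have hv' : v = e i := by
      rcases Finset.mem_insert.mp hv with h | h
      · exact h
      · exact absurd hvn ((hTmem v).mp h)
    exact hne (hu'.trans hv'.symm)
  let F : Fin n → TSVert G k := fun i => ⟨I i, hIcard i, hIind i⟩
  -- every size-k independent set contains a unique vertex < n, and all of T
  have huniq : ∀ J : TSVert G k, ∃! a : Fin N, a ∈ (J : Finset (Fin N)) ∧ a.val < n := by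
    rintro ⟨J, hJcard, hJind⟩
    have hatmost : ∀ a ∈ J, a.val < n → ∀ b ∈ J, b.val < n → a = b := by
      intro a ha han b hb hbn
      by_contra hne
      exact hJind a ha b hb ((hG a b).mpr ⟨hne, han, hbn⟩)
    have hsub : J.filter (fun x => ¬ x.val < n) ⊆ T := by
      intro x hx
      rw [hTmem]
      exact (Finset.mem_filter.mp hx).2
    have h1 : (J.filter (fun x => ¬ x.val < n)).card ≤ k - 1 :=
      hTcard ▸ Finset.card_le_card hsub
    have h2 : (J.filter (fun x => x.val < n)).card ≤ 1 := by
      apply Finset.card_le_one.mpr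
      intro a ha b hb
      rw [Finset.mem_filter] at ha hb
      exact hatmost a ha.1 ha.2 b hb.1 hb.2
    have h3 := Finset.card_filter_add_card_filter_not
      (s := J) (p := fun x : Fin N => x.val < n)
    rw [hJcard] at h3
    have h4 : (J.filter (fun x => x.val < n)).card = 1 := by omega
    obtain ⟨a, ha⟩ := Finset.card_eq_one.mp h4
    refine ⟨a, ?_, ?_⟩
    · have : a ∈ J.filter (fun x => x.val < n) := ha ▸ Finset.mem_singleton_self a
      exact ⟨(Finset.mem_filter.mp this).1, (Finset.mem_filter.mp this).2⟩
    · intro b hb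
      have : b ∈ J.filter (fun x => x.val < n) := Finset.mem_filter.mpr ⟨hb.1, hb.2⟩
      rw [ha, Finset.mem_singleton] at this
      exact this
  let g : TSVert G k → Fin n := fun J =>
    ⟨(Finset.choose _ (J : Finset (Fin N)) (huniq J)).val,
      (Finset.choose_property (fun a : Fin N => a.val < n) (J : Finset (Fin N)) (huniq J))⟩
  have hg : ∀ J : TSVert G k, e (g J) = Finset.choose _ (J : Finset (Fin N)) (huniq J) := by
    intro J
    ext
    rfl
  have hchoose_mem : ∀ J : TSVert G k,
      Finset.choose (fun a : Fin N => a.val < n) (J : Finset (Fin N)) (huniq J) ∈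
        (J : Finset (Fin N)) :=
    fun J => Finset.choose_mem _ _ _
  have hsubJ : ∀ J : TSVert G k, (J : Finset (Fin N)) ⊆ I (g J) := by
    intro J x hx
    by_cases hxn : x.val < n
    · obtain ⟨a, -, hu⟩ := huniq J
      have hx' : x = Finset.choose (fun a : Fin N => a.val < n) (J : Finset (Fin N)) (huniq J) := by
        have h1 := hu x ⟨hx, hxn⟩
        have h2 := hu _ ⟨hchoose_mem J,
          Finset.choose_property (fun a : Fin N => a.val < n) (J : Finset (Fin N)) (huniq J)⟩
        rw [h1, h2]
      rw [hx', ← hg J]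
      exact Finset.mem_insert_self _ _
    · exact Finset.mem_insert_of_mem ((hTmem x).mpr hxn)
  have hright : ∀ J : TSVert G k, F (g J) = J := by
    intro J
    apply Subtype.ext
    exact (Finset.eq_of_subset_of_card_le (hsubJ J)
      (by rw [J.2.1, hIcard])).symm
  have hleft : ∀ i : Fin n, g (F i) = i := by
    intro i
    have hmem : e i ∈ (F i : Finset (Fin N)) := Finset.mem_insert_self _ _
    obtain ⟨a, -, hu⟩ := huniq (F i)
    have h1 := hu (e i) ⟨hmem, i.isLt⟩
    have h2 := hu _ ⟨hchoose_mem (F i),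
      Finset.choose_property (fun a : Fin N => a.val < n) ((F i) : Finset (Fin N)) (huniq (F i))⟩
    have : e (g (F i)) = e i := by rw [hg (F i), h2, ← h1]
    have h3 : (e (g (F i))).val = (e i).val := congrArg Fin.val this
    exact Fin.ext h3
  have hInej : ∀ i j : Fin n, i ≠ j → e i ∉ I j := by
    intro i j hij h
    rcases Finset.mem_insert.mp h with h | h
    · have h3 : (e i).val = (e j).val := congrArg Fin.val h
      exact hij (Fin.ext h3)
    · exact heT i h
  refine ⟨G, ⟨?_⟩⟩
  refine (SimpleGraph.Iso.symm ⟨Equiv.mk F g hleft hright, ?_⟩)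
  intro i j
  simp only [Equiv.coe_fn_mk, SimpleGraph.top_adj]
  constructor
  · intro hadj
    intro hij
    subst hij
    exact (TSk G k).loopless.irrefl _ hadj
  · intro hij
    rw [TSk, SimpleGraph.fromRel_adj]
    refine ⟨?_, Or.inl ⟨e i, e j, ?_, ?_, (hG _ _).mpr ⟨?_, i.isLt, j.isLt⟩⟩⟩
    · intro h
      have : I i = I j := congrArg Subtype.val h
      exact hInej i j hij (this ▸ Finset.mem_insert_self (e i) T)
    · ext x
      simp only [Finset.mem_sdiff, Finset.mem_singleton]
      constructor
      · rintro ⟨hx1, hx2⟩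
        rcases Finset.mem_insert.mp hx1 with h | h
        · exact h
        · exact absurd (Finset.mem_insert_of_mem h) hx2
      · rintro rfl
        exact ⟨Finset.mem_insert_self _ _, hInej i j hij⟩
    · ext x
      simp only [Finset.mem_sdiff, Finset.mem_singleton]
      constructor
      · rintro ⟨hx1, hx2⟩
        rcases Finset.mem_insert.mp hx1 with h | h
        · exact h
        · exact absurd (Finset.mem_insert_of_mem h) hx2
      · rintro rfl
        exact ⟨Finset.mem_insert_self _ _, hInej j i hij.symm⟩
    · intro h
      have h3 : (e i).val = (e j).val := congrArg Fin.val h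
      exact hij (Fin.ext h3)
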